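/- (MM descent step for the penalized logistic L₂E.) Let η ≥ η* := sup_{p∈[0,1]} ψ₁(p), λ > 0, α ∈ [0,1], and write θ = (β₀, β) ∈ ℝ × ℝᵖ. Define the surrogate M(θ; θ̃) = L(θ̃) + (2/n)(F(X̃θ̃) − y)ᵀ G_{θ̃} X̃ (θ − θ̃) + (η/(2n))‖X̃(θ − θ̃)‖₂² + λ(α‖β‖₁ + ((1−α)/2)‖β‖₂²), where G_{θ̃} is diagonal with entries F(x̃ᵢᵀθ̃)(1 − F(x̃ᵢᵀθ̃)). If θ⁺ = (β₀⁺, β⁺) satisfies M(θ⁺; θ̃) ≤ M(θ̃; θ̃), then L(θ⁺) + λ(α‖β⁺‖₁ + ((1−α)/2)‖β⁺‖₂²) ≤ L(θ̃) + λ(α‖β̃‖₁ + ((1−α)/2)‖β̃‖₂²). -/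

import Mathlib

open Finset

/-- The logistic function `F(u) = 1/(1 + exp(-u))`. -/
noncomputable def logisticF (u : ℝ) : ℝ := 1 / (1 + Real.exp (-u))

/-- `ψ_u(p) = [2p(1−p) − (2p−1)((2p−1) − u)]·p(1−p)`. -/
def psi (u p : ℝ) : ℝ := (2*p*(1-p) - (2*p-1)*((2*p-1) - u)) * (p*(1-p))

/-- The logistic L₂E loss `L(θ) = (1/n)∑ᵢ (yᵢ − F(x̃ᵢᵀθ))²`, where `θ 0` is the
intercept `β₀` and `θ j.succ = βⱼ`. -/
noncomputable def L2Eloss {n p : ℕ} (X : Matrix (Fin n) (Fin (p+1)) ℝ)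
    (y : Fin n → ℝ) (θ : Fin (p+1) → ℝ) : ℝ :=
  (1/(n:ℝ)) * ∑ i, (y i - logisticF (∑ j, X i j * θ j))^2

/-- The Elastic Net penalty `λ(α‖β‖₁ + ((1−α)/2)‖β‖₂²)` on the non-intercept
coordinates `β = (θ 1, …, θ p)` of `θ = (β₀, β)`. -/
noncomputable def enPen {p : ℕ} (lam α : ℝ) (θ : Fin (p+1) → ℝ) : ℝ :=
  lam * (α * ∑ j : Fin p, |θ j.succ| + ((1 - α)/2) * ∑ j : Fin p, (θ j.succ)^2)

/-- The penalized quadratic surrogate `M(θ; θ̃)` of Theorem 4.1. -/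
noncomputable def surrogate {n p : ℕ} (X : Matrix (Fin n) (Fin (p+1)) ℝ)
    (y : Fin n → ℝ) (η lam α : ℝ) (θ θt : Fin (p+1) → ℝ) : ℝ :=
  L2Eloss X y θt
    + (2/(n:ℝ)) * ∑ i,
        (logisticF (∑ j, X i j * θt j) - y i)
          * (logisticF (∑ j, X i j * θt j) * (1 - logisticF (∑ j, X i j * θt j)))
          * (∑ j, X i j * (θ j - θt j))
    + (η/(2*(n:ℝ))) * ∑ i, (∑ j, X i j * (θ j - θt j))^2
    + enPen lam α θ


/-! ### Auxiliary lemmas -/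

lemma logisticF_hasDerivAt (u : ℝ) :
    HasDerivAt logisticF (logisticF u * (1 - logisticF u)) u := by
  have hpos : (0:ℝ) < 1 + Real.exp (-u) := by positivity
  have h1 : HasDerivAt (fun x : ℝ => 1 + Real.exp (-x)) (-Real.exp (-u)) u := by
    have h := (Real.hasDerivAt_exp (-u)).comp u (hasDerivAt_neg u)
    simpa [mul_comm] using h.const_add 1
  have h2 := h1.inv hpos.ne'
  have heq : logisticF = fun x : ℝ => (1 + Real.exp (-x))⁻¹ := by
    funext x; simp [logisticF, one_div]
  rw [heq]
  refine HasDerivAt.congr_deriv h2 ?_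
  have hne : (1:ℝ) + Real.exp (-u) ≠ 0 := hpos.ne'
  simp only [logisticF]
  field_simp
  ring

lemma logisticF_mem (u : ℝ) : logisticF u ∈ Set.Icc (0:ℝ) 1 := by
  have hpos : (0:ℝ) < 1 + Real.exp (-u) := by positivity
  constructor
  · unfold logisticF; positivity
  · unfold logisticF
    rw [div_le_one hpos]
    nlinarith [Real.exp_pos (-u)]

/-- The surrogate's per-sample upper function. -/
noncomputable def gAux (η y a : ℝ) : ℝ → ℝ := fun t =>
  (y - logisticF a)^2 + 2*((logisticF a - y)*(logisticF a*(1-logisticF a))*t)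
    + (η/2)*t^2 - (y - logisticF (a+t))^2

/-- Derivative of `gAux`. -/
noncomputable def gAux' (η y a : ℝ) : ℝ → ℝ := fun t =>
  2*((logisticF a - y)*(logisticF a*(1-logisticF a))) + η*t
    - 2*((logisticF (a+t) - y)*(logisticF (a+t)*(1-logisticF (a+t))))

lemma q_hasDerivAt (a t : ℝ) :
    HasDerivAt (fun t : ℝ => logisticF (a+t))
      (logisticF (a+t) * (1 - logisticF (a+t))) t := by
  have h0 : HasDerivAt (fun t : ℝ => a + t) 1 t := (hasDerivAt_id t).const_add a
  exact ((logisticF_hasDerivAt (a+t)).comp t h0).congr_deriv (mul_one _)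

lemma gAux_hasDerivAt (η y a t : ℝ) : HasDerivAt (gAux η y a) (gAux' η y a t) t := by
  have hq := q_hasDerivAt a t
  have h1 : HasDerivAt (fun t : ℝ => (y - logisticF (a+t))^2)
      (2*(y - logisticF (a+t))*(0 - logisticF (a+t)*(1 - logisticF (a+t)))) t := by
    have h := ((hasDerivAt_const t y).sub hq).pow 2
    refine HasDerivAt.congr_deriv h ?_
    simp only [Pi.sub_apply]; push_cast
    ring
  have h2 : HasDerivAt
      (fun t : ℝ => (y - logisticF a)^2
        + 2*((logisticF a - y)*(logisticF a*(1-logisticF a))*t) + (η/2)*t^2)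
      (2*((logisticF a - y)*(logisticF a*(1-logisticF a))) + (η/2)*(↑2 * t^1)) t := by
    have ha : HasDerivAt (fun t : ℝ => (logisticF a - y)*(logisticF a*(1-logisticF a))*t)
        ((logisticF a - y)*(logisticF a*(1-logisticF a))) t := by
      simpa using (hasDerivAt_id t).const_mul ((logisticF a - y)*(logisticF a*(1-logisticF a)))
    have h := ((hasDerivAt_const t ((y - logisticF a)^2)).add (ha.const_mul 2)).add
      ((hasDerivAt_pow 2 t).const_mul (η/2))
    refine HasDerivAt.congr_deriv h ?_
    push_cast
    ring
  have h := h2.sub h1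
  refine HasDerivAt.congr_deriv h ?_
  simp only [gAux']
  push_cast
  ring

lemma gAux'_hasDerivAt (η y a t : ℝ) :
    HasDerivAt (gAux' η y a)
      (η - (2*(logisticF (a+t)*(1-logisticF (a+t)))
            + 2*((logisticF (a+t) - y)*(1-2*logisticF (a+t))))
              * (logisticF (a+t)*(1-logisticF (a+t)))) t := by
  have hq := q_hasDerivAt a t
  have h1 : HasDerivAt (fun t : ℝ => logisticF (a+t) - y)
      (logisticF (a+t) * (1 - logisticF (a+t))) t := hq.sub_const y
  have h2 : HasDerivAt (fun t : ℝ => logisticF (a+t) * (1 - logisticF (a+t)))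
      (logisticF (a+t) * (1 - logisticF (a+t)) * (1 - logisticF (a+t))
        + logisticF (a+t) * (0 - logisticF (a+t) * (1 - logisticF (a+t)))) t :=
    hq.mul ((hasDerivAt_const t 1).sub hq)
  have h3 := (h1.mul h2).const_mul 2
  have hlin : HasDerivAt
      (fun t : ℝ => 2*((logisticF a - y)*(logisticF a*(1-logisticF a))) + η*t) η t := by
    simpa using ((hasDerivAt_id t).const_mul η).const_add
      (2*((logisticF a - y)*(logisticF a*(1-logisticF a))))
  have h := hlin.sub h3
  refine HasDerivAt.congr_deriv h ?_
  ring

lemma psi_bound_aux (η y q : ℝ) (hψ : ∀ q ∈ Set.Icc (0:ℝ) 1, psi 1 q ≤ η)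
    (hy : y = 0 ∨ y = 1) (hq : q ∈ Set.Icc (0:ℝ) 1) :
    (2*(q*(1-q)) + 2*((q - y)*(1-2*q))) * (q*(1-q)) ≤ η := by
  rcases hy with rfl | rfl
  · have := hψ (1-q) ⟨by linarith [hq.2], by linarith [hq.1]⟩
    calc (2*(q*(1-q)) + 2*((q - 0)*(1-2*q))) * (q*(1-q)) = psi 1 (1-q) := by
          unfold psi; ring
      _ ≤ η := this
  · have := hψ q hq
    calc (2*(q*(1-q)) + 2*((q - 1)*(1-2*q))) * (q*(1-q)) = psi 1 q := by
          unfold psi; ring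
      _ ≤ η := this

lemma gAux'_monotone (η y a : ℝ) (hψ : ∀ q ∈ Set.Icc (0:ℝ) 1, psi 1 q ≤ η)
    (hy : y = 0 ∨ y = 1) : Monotone (gAux' η y a) := by
  apply monotone_of_deriv_nonneg
  · exact fun t => (gAux'_hasDerivAt η y a t).differentiableAt
  · intro t
    rw [(gAux'_hasDerivAt η y a t).deriv]
    have hb := psi_bound_aux η y (logisticF (a+t)) hψ hy (logisticF_mem (a+t))
    linarith

lemma gAux'_zero (η y a : ℝ) : gAux' η y a 0 = 0 := by
  unfold gAux'
  rw [add_zero]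
  ring

lemma gAux_zero (η y a : ℝ) : gAux η y a 0 = 0 := by
  unfold gAux
  rw [add_zero]
  ring

lemma gAux_nonneg (η y a : ℝ) (hψ : ∀ q ∈ Set.Icc (0:ℝ) 1, psi 1 q ≤ η)
    (hy : y = 0 ∨ y = 1) (u : ℝ) : 0 ≤ gAux η y a u := by
  have hmono := gAux'_monotone η y a hψ hy
  have hdiff : Differentiable ℝ (gAux η y a) :=
    fun t => (gAux_hasDerivAt η y a t).differentiableAt
  rcases le_total 0 u with hu | hu
  · have hmon : MonotoneOn (gAux η y a) (Set.Ici 0) := by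
      apply monotoneOn_of_deriv_nonneg (convex_Ici 0) hdiff.continuous.continuousOn
        hdiff.differentiableOn
      intro x hx
      rw [interior_Ici] at hx
      rw [(gAux_hasDerivAt η y a x).deriv]
      have := hmono (le_of_lt hx)
      rw [gAux'_zero] at this
      exact this
    have := hmon (Set.self_mem_Ici) hu hu
    rwa [gAux_zero] at this
  · have hant : AntitoneOn (gAux η y a) (Set.Iic 0) := by
      apply antitoneOn_of_deriv_nonpos (convex_Iic 0) hdiff.continuous.continuousOn
        hdiff.differentiableOn
      intro x hx
      rw [interior_Iic] at hx
      rw [(gAux_hasDerivAt η y a x).deriv]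
      have := hmono (le_of_lt hx)
      rw [gAux'_zero] at this
      exact this
    have := hant hu (Set.self_mem_Iic) hu
    rwa [gAux_zero] at this

/-- Key per-sample majorization inequality. -/
lemma key_ineq (η y a u : ℝ) (hψ : ∀ q ∈ Set.Icc (0:ℝ) 1, psi 1 q ≤ η)
    (hy : y = 0 ∨ y = 1) :
    (y - logisticF (a+u))^2 ≤ (y - logisticF a)^2
      + 2*((logisticF a - y)*(logisticF a*(1-logisticF a))*u) + (η/2)*u^2 := by
  have h := gAux_nonneg η y a hψ hy u
  unfold gAux at h
  linarith

/-- MM descent step for the penalized logistic L₂E: if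
`η ≥ η* = sup_{p∈[0,1]} ψ₁(p)` and `θ⁺` satisfies `M(θ⁺; θ̃) ≤ M(θ̃; θ̃)`, then the
penalized objective does not increase: `L(θ⁺) + J(β⁺) ≤ L(θ̃) + J(β̃)`. -/
theorem stmt_11 (n p : ℕ) (hn : 0 < n)
    (X : Matrix (Fin n) (Fin (p+1)) ℝ) (y : Fin n → ℝ)
    (hy : ∀ i, y i = 0 ∨ y i = 1)
    (η lam α : ℝ) (hη : sSup (psi 1 '' Set.Icc (0:ℝ) 1) ≤ η)
    (hlam : 0 < lam) (hα : α ∈ Set.Icc (0:ℝ) 1)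
    (θplus θt : Fin (p+1) → ℝ)
    (hstep : surrogate X y η lam α θplus θt ≤ surrogate X y η lam α θt θt) :
    L2Eloss X y θplus + enPen lam α θplus ≤ L2Eloss X y θt + enPen lam α θt := by
  have hcont : Continuous (psi 1) := by unfold psi; continuity
  have hbdd : BddAbove (psi 1 '' Set.Icc (0:ℝ) 1) :=
    (isCompact_Icc.image hcont).bddAbove
  have hψ : ∀ q ∈ Set.Icc (0:ℝ) 1, psi 1 q ≤ η :=
    fun q hq => (le_csSup hbdd ⟨q, hq, rfl⟩).trans hη
  have hn' : (n:ℝ) ≠ 0 := Nat.cast_ne_zero.mpr hn.ne'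
  -- The surrogate at θt equals the penalized loss at θt.
  have hMtt : surrogate X y η lam α θt θt = L2Eloss X y θt + enPen lam α θt := by
    unfold surrogate
    simp [sub_self]
  -- The surrogate majorizes the penalized loss at θplus.
  have hmaj : L2Eloss X y θplus + enPen lam α θplus ≤ surrogate X y η lam α θplus θt := by
    have key_i : ∀ i ∈ Finset.univ (α := Fin n),
        (y i - logisticF (∑ j, X i j * θplus j))^2
          ≤ (y i - logisticF (∑ j, X i j * θt j))^2
            + 2*((logisticF (∑ j, X i j * θt j) - y i)
                * (logisticF (∑ j, X i j * θt j) * (1 - logisticF (∑ j, X i j * θt j)))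
                * (∑ j, X i j * (θplus j - θt j)))
            + (η/2)*(∑ j, X i j * (θplus j - θt j))^2 := by
      intro i _
      have heq : ∑ j, X i j * θplus j
          = (∑ j, X i j * θt j) + ∑ j, X i j * (θplus j - θt j) := by
        rw [← Finset.sum_add_distrib]
        exact Finset.sum_congr rfl fun j _ => by ring
      rw [heq]
      exact key_ineq η (y i) (∑ j, X i j * θt j) (∑ j, X i j * (θplus j - θt j)) hψ (hy i)
    have hs := Finset.sum_le_sum key_i
    have hmul : (1/(n:ℝ)) * ∑ i, (y i - logisticF (∑ j, X i j * θplus j))^2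
        ≤ (1/(n:ℝ)) * ∑ i,
            ((y i - logisticF (∑ j, X i j * θt j))^2
            + 2*((logisticF (∑ j, X i j * θt j) - y i)
                * (logisticF (∑ j, X i j * θt j) * (1 - logisticF (∑ j, X i j * θt j)))
                * (∑ j, X i j * (θplus j - θt j)))
            + (η/2)*(∑ j, X i j * (θplus j - θt j))^2) := by
      apply mul_le_mul_of_nonneg_left hs
      positivity
    have e1 : (1/(n:ℝ)) * ∑ i,
            ((y i - logisticF (∑ j, X i j * θt j))^2
            + 2*((logisticF (∑ j, X i j * θt j) - y i)
                * (logisticF (∑ j, X i j * θt j) * (1 - logisticF (∑ j, X i j * θt j)))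
                * (∑ j, X i j * (θplus j - θt j)))
            + (η/2)*(∑ j, X i j * (θplus j - θt j))^2)
        = (1/(n:ℝ)) * ∑ i, (y i - logisticF (∑ j, X i j * θt j))^2
          + (2/(n:ℝ)) * ∑ i,
              (logisticF (∑ j, X i j * θt j) - y i)
                * (logisticF (∑ j, X i j * θt j) * (1 - logisticF (∑ j, X i j * θt j)))
                * (∑ j, X i j * (θplus j - θt j))
          + (η/(2*(n:ℝ))) * ∑ i, (∑ j, X i j * (θplus j - θt j))^2 := by
      rw [Finset.sum_add_distrib, Finset.sum_add_distrib, ← Finset.mul_sum, ← Finset.mul_sum]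
      field_simp
    rw [e1] at hmul
    unfold surrogate L2Eloss
    linarith
  calc L2Eloss X y θplus + enPen lam α θplus
      ≤ surrogate X y η lam α θplus θt := hmaj
    _ ≤ surrogate X y η lam α θt θt := hstep
    _ = L2Eloss X y θt + enPen lam α θt := hMtt
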